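/- Let Γ be a countable set, M a measurable space, and X = (X_k)_{k∈Γ} a family of independent and identically distributed random variables with values in M. Let E ⊆ M^Γ be a measurable event such that for every finite subset J ⊆ Γ there exists an injective map π : Γ → Γ which is a positional symmetry of E (i.e., for every a ∈ M^Γ, a ∈ E if and only if a∘π ∈ E) and satisfies π(J) ∩ J = ∅. Then P(X ∈ E) ∈ {0, 1}. -/

import Mathlib

open MeasureTheory ProbabilityTheory Set
open scoped symmDiff ENNReal

section Aux

variable {Ω M Γ : Type*} [MeasurableSpace Ω] [MeasurableSpace M]
  {Pr : Measure Ω} [IsProbabilityMeasure Pr] {X : Γ → Ω → M}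

/-- Box probabilities for an injectively reindexed iid family. -/
lemma iid_aux_box (hmeas : ∀ k, Measurable (X k))
    (hindep : iIndepFun X Pr)
    (hident : ∀ k k', Measure.map (X k) Pr = Measure.map (X k') Pr)
    {π : Γ → Γ} (hπ : Function.Injective π) (I : Finset Γ) (s : Γ → Set M)
    (hs : ∀ i ∈ I, MeasurableSet (s i)) :
    Pr (⋂ i ∈ I, X (π i) ⁻¹' s i) = ∏ i ∈ I, Pr (X i ⁻¹' s i) := by
  classical
  set t : Γ → Set M := fun k => if h : ∃ i, i ∈ I ∧ π i = k then s h.choose else Set.univ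
    with ht
  have hts : ∀ i ∈ I, t (π i) = s i := by
    intro i hi
    have h : ∃ j, j ∈ I ∧ π j = π i := ⟨i, hi, rfl⟩
    simp only [ht, dif_pos h]
    exact congrArg s (hπ h.choose_spec.2)
  have htm : ∀ k ∈ I.image π, MeasurableSet (t k) := by
    intro k hk
    rw [Finset.mem_image] at hk
    simp only [ht, dif_pos hk]
    exact hs _ hk.choose_spec.1
  have key := hindep.measure_inter_preimage_eq_mul (I.image π) htm
  have hI : (⋂ k ∈ I.image π, X k ⁻¹' t k) = ⋂ i ∈ I, X (π i) ⁻¹' s i := by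
    ext ω
    simp only [Set.mem_iInter, Finset.mem_image, Set.mem_preimage]
    constructor
    · intro h i hi
      have := h (π i) ⟨i, hi, rfl⟩
      rwa [hts i hi] at this
    · rintro h k ⟨i, hi, rfl⟩
      rw [hts i hi]; exact h i hi
  have hP : (∏ k ∈ I.image π, Pr (X k ⁻¹' t k)) = ∏ i ∈ I, Pr (X i ⁻¹' s i) := by
    rw [Finset.prod_image (fun i _ j _ h => hπ h)]
    refine Finset.prod_congr rfl fun i hi => ?_
    rw [hts i hi]
    rw [← Measure.map_apply (hmeas (π i)) (hs i hi), hident (π i) i,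
      Measure.map_apply (hmeas i) (hs i hi)]
  rw [← hI, key, hP]

/-- Equality of laws of finite tuples for an injectively reindexed iid family. -/
lemma iid_aux_tuple (hmeas : ∀ k, Measurable (X k))
    (hindep : iIndepFun X Pr)
    (hident : ∀ k k', Measure.map (X k) Pr = Measure.map (X k') Pr)
    {π : Γ → Γ} (hπ : Function.Injective π) (I : Finset Γ) :
    Pr.map (fun ω (i : I) => X (π i) ω) = Pr.map (fun ω (i : I) => X (i : Γ) ω) := by
  classical
  have hm1 : Measurable (fun ω (i : I) => X (π i) ω) :=
    measurable_pi_lambda _ fun i => hmeas _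
  have hm2 : Measurable (fun ω (i : I) => X (i : Γ) ω) :=
    measurable_pi_lambda _ fun i => hmeas _
  have i1 : IsProbabilityMeasure (Pr.map (fun ω (i : I) => X (π i) ω)) :=
    Measure.isProbabilityMeasure_map hm1.aemeasurable
  have i2 : IsProbabilityMeasure (Pr.map (fun ω (i : I) => X (i : Γ) ω)) :=
    Measure.isProbabilityMeasure_map hm2.aemeasurable
  refine ext_of_generate_finite _ generateFrom_pi.symm isPiSystem_pi ?_ (by simp)
  rintro s ⟨f, hf, rfl⟩
  have hfm : ∀ i : I, MeasurableSet (f i) := fun i => hf i (Set.mem_univ i)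
  have hbox : MeasurableSet (Set.pi Set.univ f) := MeasurableSet.univ_pi hfm
  rw [Measure.map_apply hm1 hbox, Measure.map_apply hm2 hbox]
  set F : Γ → Set M := fun k => if h : k ∈ I then f ⟨k, h⟩ else Set.univ with hF
  have hFm : ∀ k ∈ I, MeasurableSet (F k) := fun k hk => by
    simp only [hF, dif_pos hk]; exact hfm _
  have hq : ∀ ρ : Γ → Γ, Function.Injective ρ →
      Pr ((fun ω (i : I) => X (ρ i) ω) ⁻¹' Set.pi Set.univ f)
        = ∏ i ∈ I, Pr (X i ⁻¹' F i) := by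
    intro ρ hρ
    have hpre : (fun ω (i : I) => X (ρ i) ω) ⁻¹' Set.pi Set.univ f
        = ⋂ k ∈ I, X (ρ k) ⁻¹' F k := by
      ext ω
      simp only [Set.mem_preimage, Set.mem_univ_pi, Set.mem_iInter]
      constructor
      · intro h k hk
        have := h ⟨k, hk⟩
        simpa only [hF, Set.mem_preimage, dif_pos hk] using this
      · intro h i
        have := h i i.2
        simpa only [hF, Set.mem_preimage, dif_pos i.2] using this
    rw [hpre]
    exact iid_aux_box hmeas hindep hident hρ I F hFm
  exact (hq π hπ).trans (hq (fun k => k) (fun a b h => h)).symm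

/-- Equality of laws of the whole family under injective reindexing. -/
lemma iid_aux_law [Countable Γ] (hmeas : ∀ k, Measurable (X k))
    (hindep : iIndepFun X Pr)
    (hident : ∀ k k', Measure.map (X k) Pr = Measure.map (X k') Pr)
    {π : Γ → Γ} (hπ : Function.Injective π) :
    Pr.map (fun ω k => X (π k) ω) = Pr.map (fun ω k => X k ω) := by
  have hm1 : Measurable (fun ω k => X (π k) ω) := measurable_pi_lambda _ fun k => hmeas _
  have hm2 : Measurable (fun ω k => X k ω) := measurable_pi_lambda _ fun k => hmeas _
  have i1 : IsProbabilityMeasure (Pr.map (fun ω k => X (π k) ω)) :=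
    Measure.isProbabilityMeasure_map hm1.aemeasurable
  have i2 : IsProbabilityMeasure (Pr.map (fun ω k => X k ω)) :=
    Measure.isProbabilityMeasure_map hm2.aemeasurable
  refine ext_of_generate_finite _ generateFrom_measurableCylinders.symm
    isPiSystem_measurableCylinders ?_ (by simp)
  intro s hs
  obtain ⟨I, T, hT, rfl⟩ := (mem_measurableCylinders _).mp hs
  rw [Measure.map_apply hm1 (MeasurableSet.cylinder I hT),
    Measure.map_apply hm2 (MeasurableSet.cylinder I hT)]
  have h1 : (fun ω k => X (π k) ω) ⁻¹' cylinder I T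
      = (fun ω (i : I) => X (π i) ω) ⁻¹' T := rfl
  have h2 : (fun ω k => X k ω) ⁻¹' cylinder I T
      = (fun ω (i : I) => X (i : Γ) ω) ⁻¹' T := rfl
  rw [h1, h2, ← Measure.map_apply (measurable_pi_lambda _ fun i : I => hmeas (π i)) hT,
    ← Measure.map_apply (measurable_pi_lambda _ fun i : I => hmeas (i : Γ)) hT,
    iid_aux_tuple hmeas hindep hident hπ I]

/-- Independence of a cylinder event and its image under a reindexing avoiding its base. -/
lemma iid_aux_indep (hmeas : ∀ k, Measurable (X k))
    (hindep : iIndepFun X Pr)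
    {π : Γ → Γ} (I : Finset Γ) {T : Set (∀ i : I, M)} (hT : MeasurableSet T)
    (hdisj : ∀ i ∈ I, π i ∉ I) :
    Pr ((fun ω k => X k ω) ⁻¹' cylinder I T ∩ (fun ω k => X (π k) ω) ⁻¹' cylinder I T)
      = Pr ((fun ω k => X k ω) ⁻¹' cylinder I T)
        * Pr ((fun ω k => X (π k) ω) ⁻¹' cylinder I T) := by
  classical
  have hdisj2 : Disjoint I (I.image π) := by
    rw [Finset.disjoint_right]
    intro a ha has
    obtain ⟨i, hi, rfl⟩ := Finset.mem_image.mp ha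
    exact hdisj i hi has
  have hIF := hindep.indepFun_finset I (I.image π) hdisj2 hmeas
  set r : (∀ k : (I.image π : Finset Γ), M) → (∀ i : I, M) :=
    fun v i => v ⟨π i, Finset.mem_image_of_mem π i.2⟩ with hr
  have hrm : Measurable r := measurable_pi_lambda _ fun i => measurable_pi_apply _
  have key := hIF.measure_inter_preimage_eq_mul T (r ⁻¹' T) hT (hrm hT)
  have e1 : (fun a (i : I) => X (i : Γ) a) ⁻¹' T
      = (fun ω k => X k ω) ⁻¹' cylinder I T := rfl
  have e2 : (fun a (k : (I.image π : Finset Γ)) => X (k : Γ) a) ⁻¹' (r ⁻¹' T)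
      = (fun ω k => X (π k) ω) ⁻¹' cylinder I T := rfl
  rw [e1, e2] at key
  exact key

end Aux

/-- **Zero-one law for i.i.d. random variables and symmetric events.**
If `E` is a measurable event in `M^Γ` such that for every finite `J ⊆ Γ` there is an
injective positional symmetry `π` of `E` with `π(J) ∩ J = ∅`, then `P(X ∈ E) ∈ {0,1}`
for every i.i.d. family `X = (X_k)_{k ∈ Γ}`. -/
theorem iid_symmetric_zero_one_law
    {Ω M Γ : Type*} [MeasurableSpace Ω] [MeasurableSpace M] [Countable Γ]
    (Pr : Measure Ω) [IsProbabilityMeasure Pr]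
    (X : Γ → Ω → M) (hmeas : ∀ k, Measurable (X k))
    (hindep : iIndepFun X Pr)
    (hident : ∀ k k', Measure.map (X k) Pr = Measure.map (X k') Pr)
    (E : Set (Γ → M)) (hE : MeasurableSet E)
    (hsym : ∀ J : Finset Γ, ∃ π : Γ → Γ, Function.Injective π ∧
      (∀ a : Γ → M, a ∈ E ↔ (fun k => a (π k)) ∈ E) ∧
      (∀ j ∈ J, π j ∉ J)) :
    Pr {ω | (fun k => X k ω) ∈ E} = 0 ∨ Pr {ω | (fun k => X k ω) ∈ E} = 1 := by
  classical
  set φ : Ω → Γ → M := fun ω k => X k ω with hφdef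
  have hφ : Measurable φ := measurable_pi_lambda _ hmeas
  show Pr (φ ⁻¹' E) = 0 ∨ Pr (φ ⁻¹' E) = 1
  set r := Pr (φ ⁻¹' E) with hrdef
  have hr1 : r ≤ 1 := prob_le_one
  have halg : IsSetAlgebra (measurableCylinders (fun _ : Γ => M)) :=
    ⟨empty_mem_measurableCylinders _, fun s hs => compl_mem_measurableCylinders hs,
      fun s t hs ht => union_mem_measurableCylinders hs ht⟩
  have hprobmap : IsProbabilityMeasure (Pr.map φ) := Measure.isProbabilityMeasure_map hφ.aemeasurable
  have hdense := Measure.MeasureDense.of_generateFrom_isSetAlgebra_finite (μ := Pr.map φ)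
    halg generateFrom_measurableCylinders.symm
  -- helper symmetric-difference inequalities
  have hsub : ∀ U V : Set Ω, Pr U ≤ Pr V + Pr (U ∆ V) := by
    intro U V
    refine (measure_mono ?_).trans (measure_union_le _ _)
    intro x hx
    by_cases h : x ∈ V
    · exact Or.inl h
    · exact Or.inr (Set.mem_symmDiff.mpr (Or.inl ⟨hx, h⟩))
  have htri : ∀ U V W : Set Ω, Pr U ≤ Pr (V ∩ W) + (Pr (U ∆ V) + Pr (U ∆ W)) := by
    intro U V W
    refine (measure_mono ?_).trans ((measure_union_le _ _).trans
      (add_le_add le_rfl (measure_union_le _ _)))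
    intro x hx
    by_cases hv : x ∈ V
    · by_cases hw : x ∈ W
      · exact Or.inl ⟨hv, hw⟩
      · exact Or.inr (Or.inr (Set.mem_symmDiff.mpr (Or.inl ⟨hx, hw⟩)))
    · exact Or.inr (Or.inl (Set.mem_symmDiff.mpr (Or.inl ⟨hx, hv⟩)))
  have htri' : ∀ U V W : Set Ω, Pr (V ∩ W) ≤ Pr U + (Pr (U ∆ V) + Pr (U ∆ W)) := by
    intro U V W
    refine (measure_mono ?_).trans ((measure_union_le _ _).trans
      (add_le_add le_rfl (measure_union_le _ _)))
    intro x hx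
    by_cases hu : x ∈ U
    · exact Or.inl hu
    · exact Or.inr (Or.inl (Set.mem_symmDiff.mpr (Or.inr ⟨hx.1, hu⟩)))
  have hpre_sym : ∀ (f : Ω → Γ → M) (U V : Set (Γ → M)),
      f ⁻¹' (U ∆ V) = (f ⁻¹' U) ∆ (f ⁻¹' V) := by
    intro f U V
    simp [Set.symmDiff_def, Set.preimage_union, Set.preimage_diff]
  -- the key inequalities
  have main : ∀ ε : NNReal, 0 < ε → r ≤ r * r + ε ∧ r * r ≤ r + ε := by
    intro ε hε
    set εR : ℝ := min ((ε : ℝ) / 5) 1 with hεR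
    have hεR0 : 0 < εR := lt_min (by positivity) one_pos
    obtain ⟨S, hSmem, hS⟩ := hdense.approx E hE (measure_ne_top _ _) εR hεR0
    set e := ENNReal.ofReal εR with he
    have he1 : e ≤ 1 := by rw [he]; exact ENNReal.ofReal_le_one.mpr (min_le_right _ _)
    have he5 : 5 * e ≤ (ε : ℝ≥0∞) := by
      have h1 : (5 : ℝ≥0∞) * e = ENNReal.ofReal (5 * εR) := by
        rw [ENNReal.ofReal_mul (by norm_num), ENNReal.ofReal_ofNat]
      have h2 : 5 * εR ≤ (ε : ℝ) := by
        have : εR ≤ (ε : ℝ) / 5 := min_le_left _ _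
        nlinarith
      rw [h1, ← ENNReal.ofReal_coe_nnreal]
      exact ENNReal.ofReal_le_ofReal h2
    obtain ⟨I, T, hT, rfl⟩ := (mem_measurableCylinders _).mp hSmem
    obtain ⟨π, hπinj, hπE, hπJ⟩ := hsym I
    set ψ : Ω → Γ → M := fun ω k => X (π k) ω with hψdef
    have hψ : Measurable ψ := measurable_pi_lambda _ fun k => hmeas _
    have hlaw : Pr.map ψ = Pr.map φ := iid_aux_law hmeas hindep hident hπinj
    set A := φ ⁻¹' E with hA
    set B := φ ⁻¹' cylinder I T with hB
    set B' := ψ ⁻¹' cylinder I T with hB'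
    have hmcyl : MeasurableSet (cylinder I T) := MeasurableSet.cylinder (α := fun _ : Γ => M) I hT
    have hmsd : MeasurableSet (E ∆ cylinder I T) := hE.symmDiff hmcyl
    have hAe : A = ψ ⁻¹' E := by
      ext ω; exact hπE (φ ω)
    have hABe : Pr (A ∆ B) < e := by
      have h0 : A ∆ B = φ ⁻¹' (E ∆ cylinder I T) := by
        rw [hpre_sym φ E (cylinder I T)]
      rw [h0, ← Measure.map_apply hφ hmsd]
      exact hS
    have hABe' : Pr (A ∆ B') < e := by
      have h0 : A ∆ B' = ψ ⁻¹' (E ∆ cylinder I T) := by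
        rw [hAe, hpre_sym ψ E (cylinder I T)]
      rw [h0, ← Measure.map_apply hψ hmsd, hlaw]
      exact hS
    have hind : Pr (B ∩ B') = Pr B * Pr B' :=
      iid_aux_indep (X := X) (π := π) hmeas hindep I hT hπJ
    have hb1 : Pr B ≤ 1 := prob_le_one
    have hb'1 : Pr B' ≤ 1 := prob_le_one
    have hble : Pr B ≤ r + e := by
      refine (hsub B A).trans (add_le_add le_rfl ?_)
      rw [symmDiff_comm]; exact hABe.le
    have hb'le : Pr B' ≤ r + e := by
      refine (hsub B' A).trans (add_le_add le_rfl ?_)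
      rw [symmDiff_comm]; exact hABe'.le
    constructor
    · calc r = Pr A := rfl
        _ ≤ Pr (B ∩ B') + (Pr (A ∆ B) + Pr (A ∆ B')) := htri A B B'
        _ ≤ Pr B * Pr B' + (e + e) := by
            rw [hind]; gcongr
        _ ≤ (r + e) * (r + e) + (e + e) := by gcongr
        _ = r * r + (r * e + (e * r + e * e)) + (e + e) := by ring
        _ ≤ r * r + (1 * e + (e * 1 + e * 1)) + (e + e) := by gcongr
        _ = r * r + 5 * e := by ring
        _ ≤ r * r + ε := add_le_add le_rfl he5
    · calc r * r = Pr A * Pr A := rfl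
        _ ≤ (Pr B + e) * (Pr B' + e) := by
            gcongr
            · exact (hsub A B).trans (add_le_add le_rfl hABe.le)
            · exact (hsub A B').trans (add_le_add le_rfl hABe'.le)
        _ = Pr B * Pr B' + (Pr B * e + (e * Pr B' + e * e)) := by ring
        _ ≤ Pr B * Pr B' + (1 * e + (e * 1 + e * 1)) := by gcongr
        _ = Pr (B ∩ B') + 3 * e := by rw [hind]; ring
        _ ≤ (Pr A + (Pr (A ∆ B) + Pr (A ∆ B'))) + 3 * e := by
            gcongr; exact htri' A B B'
        _ ≤ (r + (e + e)) + 3 * e := by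
            gcongr
        _ = r + 5 * e := by ring
        _ ≤ r + ε := add_le_add le_rfl he5
  have hrr_lt_top : r * r < ∞ :=
    (mul_le_mul' hr1 hr1).trans_lt (by simpa using ENNReal.one_lt_top)
  have hr_lt_top : r < ∞ := hr1.trans_lt ENNReal.one_lt_top
  have h1 : r ≤ r * r := ENNReal.le_of_forall_pos_le_add fun ε hε _ => (main ε hε).1
  have h2 : r * r ≤ r := ENNReal.le_of_forall_pos_le_add fun ε hε _ => (main ε hε).2
  have heq : r * r = r := le_antisymm h2 h1
  rcases eq_or_ne r 0 with h0 | h0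
  · exact Or.inl h0
  · exact Or.inr ((ENNReal.mul_eq_left h0 hr_lt_top.ne).mp heq)
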